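/- Let f(X) = (1-X^2)^{-1} · (1-X^4)^{-1} · (1-X^6)^{-2} · (1-X^8)^{-1} · (1-X^{10})^{-2} · (1-X^{12})^{-1} · (1-X^{14})^{-1} · (1-X^{16})^{21} · (1-X^{18})^{124} in ℚ⟦X⟧. Then for an integer m, the coefficient of X^20 in f(X) · (1-X^{20})^{-m} equals -1299 if and only if m = -1202. -/

import Mathlib

open PowerSeries

/-- The series `f(X) = ∏ (1-X^{2n-2})^{-e(Out Fₙ)}` for `2 ≤ n ≤ 10`. -/
noncomputable def fSeries : PowerSeries ℚ :=
  (1 - (X : ℚ⟦X⟧) ^ 2)⁻¹ * (1 - X ^ 4)⁻¹ * ((1 - X ^ 6)⁻¹) ^ 2 *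
    (1 - X ^ 8)⁻¹ * ((1 - X ^ 10)⁻¹) ^ 2 * (1 - X ^ 12)⁻¹ * (1 - X ^ 14)⁻¹ *
    (1 - X ^ 16) ^ 21 * (1 - X ^ 18) ^ 124

private lemma step21 {a b p q T R : ℚ⟦X⟧} (ha : ∃ h, a = p + X ^ 21 * h)
    (hb : ∃ h, b = q + X ^ 21 * h) (hT : p * q = T + X ^ 21 * R) :
    ∃ g, a * b = T + X ^ 21 * g := by
  obtain ⟨h, rfl⟩ := ha; obtain ⟨k, rfl⟩ := hb
  exact ⟨R + p * k + q * h + X ^ 21 * (h * k), by linear_combination hT⟩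

private lemma inv2 : ∃ h, ((1 : ℚ⟦X⟧) - X ^ 2)⁻¹ = (1 + X ^ 2 + X ^ 4 + X ^ 6 + X ^ 8 + X ^ 10 + X ^ 12 + X ^ 14 + X ^ 16 + X ^ 18 + X ^ 20) + X ^ 21 * h := by
  have hinv : ((1 : ℚ⟦X⟧) - X ^ 2) * ((1 : ℚ⟦X⟧) - X ^ 2)⁻¹ = 1 :=
    PowerSeries.mul_inv_cancel _ (by simp)
  exact ⟨X ^ 1 * ((1 : ℚ⟦X⟧) - X ^ 2)⁻¹, by linear_combination (1 + X ^ 2 + X ^ 4 + X ^ 6 + X ^ 8 + X ^ 10 + X ^ 12 + X ^ 14 + X ^ 16 + X ^ 18 + X ^ 20) * hinv⟩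

private lemma inv4 : ∃ h, ((1 : ℚ⟦X⟧) - X ^ 4)⁻¹ = (1 + X ^ 4 + X ^ 8 + X ^ 12 + X ^ 16 + X ^ 20) + X ^ 21 * h := by
  have hinv : ((1 : ℚ⟦X⟧) - X ^ 4) * ((1 : ℚ⟦X⟧) - X ^ 4)⁻¹ = 1 :=
    PowerSeries.mul_inv_cancel _ (by simp)
  exact ⟨X ^ 3 * ((1 : ℚ⟦X⟧) - X ^ 4)⁻¹, by linear_combination (1 + X ^ 4 + X ^ 8 + X ^ 12 + X ^ 16 + X ^ 20) * hinv⟩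

private lemma inv6 : ∃ h, ((1 : ℚ⟦X⟧) - X ^ 6)⁻¹ = (1 + X ^ 6 + X ^ 12 + X ^ 18) + X ^ 21 * h := by
  have hinv : ((1 : ℚ⟦X⟧) - X ^ 6) * ((1 : ℚ⟦X⟧) - X ^ 6)⁻¹ = 1 :=
    PowerSeries.mul_inv_cancel _ (by simp)
  exact ⟨X ^ 3 * ((1 : ℚ⟦X⟧) - X ^ 6)⁻¹, by linear_combination (1 + X ^ 6 + X ^ 12 + X ^ 18) * hinv⟩

private lemma inv8 : ∃ h, ((1 : ℚ⟦X⟧) - X ^ 8)⁻¹ = (1 + X ^ 8 + X ^ 16) + X ^ 21 * h := by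
  have hinv : ((1 : ℚ⟦X⟧) - X ^ 8) * ((1 : ℚ⟦X⟧) - X ^ 8)⁻¹ = 1 :=
    PowerSeries.mul_inv_cancel _ (by simp)
  exact ⟨X ^ 3 * ((1 : ℚ⟦X⟧) - X ^ 8)⁻¹, by linear_combination (1 + X ^ 8 + X ^ 16) * hinv⟩

private lemma inv10 : ∃ h, ((1 : ℚ⟦X⟧) - X ^ 10)⁻¹ = (1 + X ^ 10 + X ^ 20) + X ^ 21 * h := by
  have hinv : ((1 : ℚ⟦X⟧) - X ^ 10) * ((1 : ℚ⟦X⟧) - X ^ 10)⁻¹ = 1 :=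
    PowerSeries.mul_inv_cancel _ (by simp)
  exact ⟨X ^ 9 * ((1 : ℚ⟦X⟧) - X ^ 10)⁻¹, by linear_combination (1 + X ^ 10 + X ^ 20) * hinv⟩

private lemma inv12 : ∃ h, ((1 : ℚ⟦X⟧) - X ^ 12)⁻¹ = (1 + X ^ 12) + X ^ 21 * h := by
  have hinv : ((1 : ℚ⟦X⟧) - X ^ 12) * ((1 : ℚ⟦X⟧) - X ^ 12)⁻¹ = 1 :=
    PowerSeries.mul_inv_cancel _ (by simp)
  exact ⟨X ^ 3 * ((1 : ℚ⟦X⟧) - X ^ 12)⁻¹, by linear_combination (1 + X ^ 12) * hinv⟩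

private lemma inv14 : ∃ h, ((1 : ℚ⟦X⟧) - X ^ 14)⁻¹ = (1 + X ^ 14) + X ^ 21 * h := by
  have hinv : ((1 : ℚ⟦X⟧) - X ^ 14) * ((1 : ℚ⟦X⟧) - X ^ 14)⁻¹ = 1 :=
    PowerSeries.mul_inv_cancel _ (by simp)
  exact ⟨X ^ 7 * ((1 : ℚ⟦X⟧) - X ^ 14)⁻¹, by linear_combination (1 + X ^ 14) * hinv⟩

private lemma binom (k : ℕ) : ∀ n : ℕ, ∃ g, ((1 : ℚ⟦X⟧) - X ^ k) ^ n
    = 1 - (n : ℚ⟦X⟧) * X ^ k + X ^ k * X ^ k * g := by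
  intro n
  induction n with
  | zero => exact ⟨0, by norm_num⟩
  | succ n ih =>
    obtain ⟨g, hg⟩ := ih
    exact ⟨(n : ℚ⟦X⟧) + g - X ^ k * g, by rw [pow_succ, hg]; push_cast; ring⟩

private lemma zpow20 (u : (PowerSeries ℚ)ˣ) (hu : (u : PowerSeries ℚ) = 1 - X ^ 20) :
    ∀ z : ℤ, ∃ g, ((u ^ z : (PowerSeries ℚ)ˣ) : ℚ⟦X⟧)
      = 1 - (z : ℚ⟦X⟧) * X ^ 20 + X ^ 40 * g := by
  have hv : ∃ w, ((u⁻¹ : (PowerSeries ℚ)ˣ) : ℚ⟦X⟧) = 1 + X ^ 20 + X ^ 40 * w := by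
    have h1 : ((u⁻¹ : (PowerSeries ℚ)ˣ) : ℚ⟦X⟧) * (1 - X ^ 20) = 1 := by
      rw [← hu]; exact_mod_cast u.inv_mul
    exact ⟨((u⁻¹ : (PowerSeries ℚ)ˣ) : ℚ⟦X⟧), by linear_combination (1 + (X:ℚ⟦X⟧) ^ 20) * h1⟩
  obtain ⟨w, hw⟩ := hv
  intro z
  induction z using Int.induction_on with
  | zero => exact ⟨0, by norm_num⟩
  | succ n ih =>
    obtain ⟨g, hg⟩ := ih
    have key : ((u ^ ((n : ℤ) + 1) : (PowerSeries ℚ)ˣ) : ℚ⟦X⟧)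
        = ((u ^ (n : ℤ) : (PowerSeries ℚ)ˣ) : ℚ⟦X⟧) * (u : ℚ⟦X⟧) := by
      rw [zpow_add_one, Units.val_mul]
    exact ⟨(n : ℚ⟦X⟧) + g * (1 - X ^ 20), by rw [key, hg, hu]; push_cast; ring⟩
  | pred n ih =>
    obtain ⟨g, hg⟩ := ih
    have key : ((u ^ (-(n : ℤ) - 1) : (PowerSeries ℚ)ˣ) : ℚ⟦X⟧)
        = ((u ^ (-(n : ℤ)) : (PowerSeries ℚ)ˣ) : ℚ⟦X⟧) * ((u⁻¹ : (PowerSeries ℚ)ˣ) : ℚ⟦X⟧) := by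
      rw [zpow_sub_one, Units.val_mul]
    exact ⟨w + (n : ℚ⟦X⟧) + (n : ℚ⟦X⟧) * X ^ 20 * w + g * (1 + X ^ 20 + X ^ 40 * w),
      by rw [key, hg, hw]; push_cast; ring⟩

private lemma sq6 : ∃ h, (((1 : ℚ⟦X⟧) - X ^ 6)⁻¹) ^ 2 = (1 + 2 * X ^ 6 + 3 * X ^ 12 + 4 * X ^ 18) + X ^ 21 * h := by
  rw [pow_two]
  exact step21 inv6 inv6 (R := 3 * X ^ 3 + 2 * X ^ 9 + X ^ 15) (by ring)

private lemma sq10 : ∃ h, (((1 : ℚ⟦X⟧) - X ^ 10)⁻¹) ^ 2 = (1 + 2 * X ^ 10 + 3 * X ^ 20) + X ^ 21 * h := by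
  rw [pow_two]
  exact step21 inv10 inv10 (R := 2 * X ^ 9 + X ^ 19) (by ring)

private lemma pow16 : ∃ h, ((1 : ℚ⟦X⟧) - X ^ 16) ^ 21 = (1 - 21 * X ^ 16) + X ^ 21 * h := by
  obtain ⟨g, hg⟩ := binom 16 21
  exact ⟨X ^ 11 * g, by rw [hg]; push_cast; ring⟩

private lemma pow18 : ∃ h, ((1 : ℚ⟦X⟧) - X ^ 18) ^ 124 = (1 - 124 * X ^ 18) + X ^ 21 * h := by
  obtain ⟨g, hg⟩ := binom 18 124
  exact ⟨X ^ 15 * g, by rw [hg]; push_cast; ring⟩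

set_option maxHeartbeats 1000000 in
private lemma fSeries_trunc : ∃ h, fSeries
    = (1 + X ^ 2 + 2 * X ^ 4 + 4 * X ^ 6 + 6 * X ^ 8 + 10 * X ^ 10 + 16 * X ^ 12 + 23 * X ^ 14 + 13 * X ^ 16 - 96 * X ^ 18 - 97 * X ^ 20) + X ^ 21 * h := by
  have h0 : ∃ h, (1 - (X : ℚ⟦X⟧) ^ 2)⁻¹ * (1 - X ^ 4)⁻¹
      = (1 + X ^ 2 + 2 * X ^ 4 + 2 * X ^ 6 + 3 * X ^ 8 + 3 * X ^ 10 + 4 * X ^ 12 + 4 * X ^ 14 + 5 * X ^ 16 + 5 * X ^ 18 + 6 * X ^ 20) + X ^ 21 * h :=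
    step21 inv2 inv4 (R := 5 * X + 5 * X ^ 3 + 4 * X ^ 5 + 4 * X ^ 7 + 3 * X ^ 9 + 3 * X ^ 11 + 2 * X ^ 13 + 2 * X ^ 15 + X ^ 17 + X ^ 19) (by ring)
  have h1 : ∃ h, (1 - (X : ℚ⟦X⟧) ^ 2)⁻¹ * (1 - X ^ 4)⁻¹ * ((1 - X ^ 6)⁻¹) ^ 2
      = (1 + X ^ 2 + 2 * X ^ 4 + 4 * X ^ 6 + 5 * X ^ 8 + 7 * X ^ 10 + 11 * X ^ 12 + 13 * X ^ 14 + 17 * X ^ 16 + 23 * X ^ 18 + 27 * X ^ 20) + X ^ 21 * h :=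
    step21 h0 sq6 (R := 27 * X + 30 * X ^ 3 + 36 * X ^ 5 + 27 * X ^ 7 + 31 * X ^ 9 + 34 * X ^ 11 + 20 * X ^ 13 + 20 * X ^ 15 + 24 * X ^ 17) (by ring)
  have h2 : ∃ h, (1 - (X : ℚ⟦X⟧) ^ 2)⁻¹ * (1 - X ^ 4)⁻¹ * ((1 - X ^ 6)⁻¹) ^ 2 * (1 - X ^ 8)⁻¹
      = (1 + X ^ 2 + 2 * X ^ 4 + 4 * X ^ 6 + 6 * X ^ 8 + 8 * X ^ 10 + 13 * X ^ 12 + 17 * X ^ 14 + 23 * X ^ 16 + 31 * X ^ 18 + 40 * X ^ 20) + X ^ 21 * h :=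
    step21 h1 inv8 (R := 17 * X + 22 * X ^ 3 + 30 * X ^ 5 + 38 * X ^ 7 + 13 * X ^ 9 + 17 * X ^ 11 + 23 * X ^ 13 + 27 * X ^ 15) (by ring)
  have h3 : ∃ h, (1 - (X : ℚ⟦X⟧) ^ 2)⁻¹ * (1 - X ^ 4)⁻¹ * ((1 - X ^ 6)⁻¹) ^ 2 * (1 - X ^ 8)⁻¹ * ((1 - X ^ 10)⁻¹) ^ 2
      = (1 + X ^ 2 + 2 * X ^ 4 + 4 * X ^ 6 + 6 * X ^ 8 + 10 * X ^ 10 + 15 * X ^ 12 + 21 * X ^ 14 + 31 * X ^ 16 + 43 * X ^ 18 + 59 * X ^ 20) + X ^ 21 * h :=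
    step21 h2 sq10 (R := 29 * X + 40 * X ^ 3 + 58 * X ^ 5 + 80 * X ^ 7 + 104 * X ^ 9 + 39 * X ^ 11 + 51 * X ^ 13 + 69 * X ^ 15 + 93 * X ^ 17 + 120 * X ^ 19) (by ring)
  have h4 : ∃ h, (1 - (X : ℚ⟦X⟧) ^ 2)⁻¹ * (1 - X ^ 4)⁻¹ * ((1 - X ^ 6)⁻¹) ^ 2 * (1 - X ^ 8)⁻¹ * ((1 - X ^ 10)⁻¹) ^ 2 * (1 - X ^ 12)⁻¹
      = (1 + X ^ 2 + 2 * X ^ 4 + 4 * X ^ 6 + 6 * X ^ 8 + 10 * X ^ 10 + 16 * X ^ 12 + 22 * X ^ 14 + 33 * X ^ 16 + 47 * X ^ 18 + 65 * X ^ 20) + X ^ 21 * h :=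
    step21 h3 inv12 (R := 10 * X + 15 * X ^ 3 + 21 * X ^ 5 + 31 * X ^ 7 + 43 * X ^ 9 + 59 * X ^ 11) (by ring)
  have h5 : ∃ h, (1 - (X : ℚ⟦X⟧) ^ 2)⁻¹ * (1 - X ^ 4)⁻¹ * ((1 - X ^ 6)⁻¹) ^ 2 * (1 - X ^ 8)⁻¹ * ((1 - X ^ 10)⁻¹) ^ 2 * (1 - X ^ 12)⁻¹ * (1 - X ^ 14)⁻¹
      = (1 + X ^ 2 + 2 * X ^ 4 + 4 * X ^ 6 + 6 * X ^ 8 + 10 * X ^ 10 + 16 * X ^ 12 + 23 * X ^ 14 + 34 * X ^ 16 + 49 * X ^ 18 + 69 * X ^ 20) + X ^ 21 * h :=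
    step21 h4 inv14 (R := 6 * X + 10 * X ^ 3 + 16 * X ^ 5 + 22 * X ^ 7 + 33 * X ^ 9 + 47 * X ^ 11 + 65 * X ^ 13) (by ring)
  have h6 : ∃ h, (1 - (X : ℚ⟦X⟧) ^ 2)⁻¹ * (1 - X ^ 4)⁻¹ * ((1 - X ^ 6)⁻¹) ^ 2 * (1 - X ^ 8)⁻¹ * ((1 - X ^ 10)⁻¹) ^ 2 * (1 - X ^ 12)⁻¹ * (1 - X ^ 14)⁻¹ * (1 - X ^ 16) ^ 21
      = (1 + X ^ 2 + 2 * X ^ 4 + 4 * X ^ 6 + 6 * X ^ 8 + 10 * X ^ 10 + 16 * X ^ 12 + 23 * X ^ 14 + 13 * X ^ 16 + 28 * X ^ 18 + 27 * X ^ 20) + X ^ 21 * h :=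
    step21 h5 pow16 (R := -84 * X - 126 * X ^ 3 - 210 * X ^ 5 - 336 * X ^ 7 - 483 * X ^ 9 - 714 * X ^ 11 - 1029 * X ^ 13 - 1449 * X ^ 15) (by ring)
  have h7 : ∃ h, (1 - (X : ℚ⟦X⟧) ^ 2)⁻¹ * (1 - X ^ 4)⁻¹ * ((1 - X ^ 6)⁻¹) ^ 2 * (1 - X ^ 8)⁻¹ * ((1 - X ^ 10)⁻¹) ^ 2 * (1 - X ^ 12)⁻¹ * (1 - X ^ 14)⁻¹ * (1 - X ^ 16) ^ 21 * (1 - X ^ 18) ^ 124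
      = (1 + X ^ 2 + 2 * X ^ 4 + 4 * X ^ 6 + 6 * X ^ 8 + 10 * X ^ 10 + 16 * X ^ 12 + 23 * X ^ 14 + 13 * X ^ 16 - 96 * X ^ 18 - 97 * X ^ 20) + X ^ 21 * h :=
    step21 h6 pow18 (R := -248 * X - 496 * X ^ 3 - 744 * X ^ 5 - 1240 * X ^ 7 - 1984 * X ^ 9 - 2852 * X ^ 11 - 1612 * X ^ 13 - 3472 * X ^ 15 - 3348 * X ^ 17) (by ring)
  rw [fSeries]
  exact h7

/-- For an integer `m`, the coefficient of `X^20` in `f(X)·(1-X^20)^{-m}` equals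
`-1299` if and only if `m = -1202`.  Here `(1-X^20)^{-m}` is expressed via the
unit `u` of `ℚ⟦X⟧` whose underlying power series is `1 - X^20`. -/
theorem coeff20_determines_eOutF11 (m : ℤ) (u : (PowerSeries ℚ)ˣ)
    (hu : (u : PowerSeries ℚ) = 1 - X ^ 20) :
    PowerSeries.coeff 20 (fSeries * ((u ^ (-m) : (PowerSeries ℚ)ˣ) : PowerSeries ℚ))
      = -1299 ↔ m = -1202 := by
  obtain ⟨H, hF⟩ := fSeries_trunc
  obtain ⟨g, hg⟩ := zpow20 u hu (-m)
  set F : ℚ⟦X⟧ := 1 + X ^ 2 + 2 * X ^ 4 + 4 * X ^ 6 + 6 * X ^ 8 + 10 * X ^ 10 + 16 * X ^ 12 + 23 * X ^ 14 + 13 * X ^ 16 - 96 * X ^ 18 - 97 * X ^ 20 with hFdef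
  have expand : fSeries * ((u ^ (-m) : (PowerSeries ℚ)ˣ) : ℚ⟦X⟧)
      = F + ((m : ℤ) : ℚ⟦X⟧) * (F * X ^ 20)
        + (H * (1 - ((-m : ℤ) : ℚ⟦X⟧) * X ^ 20 + X ^ 40 * g) + F * (X ^ 19 * g)) * X ^ 21 := by
    rw [hF, hg]; push_cast; ring
  have hc20 : PowerSeries.coeff 20 F = -97 := by
    rw [hFdef]; simp [coeff_X_pow, ← map_ofNat (C (R := ℚ)), coeff_C_mul]
  have hc0 : PowerSeries.coeff 0 F = 1 := by
    rw [hFdef]; simp [coeff_X_pow, ← map_ofNat (C (R := ℚ)), coeff_C_mul]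
  have hcast : ((m : ℤ) : ℚ⟦X⟧) = C ((m : ℤ) : ℚ) := (map_intCast (C (R := ℚ)) m).symm
  rw [expand, map_add, map_add, hc20, hcast, coeff_C_mul,
    coeff_mul_X_pow' _ 21 20, coeff_mul_X_pow' _ 20 20]
  norm_num [hc0]
  constructor
  · intro h
    have h2 : ((m : ℚ)) = -1202 := by linarith
    exact_mod_cast h2
  · intro h; subst h; norm_num
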